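/- Let U ⊆ B(K₁,K₂) be a weak* closed subspace, A ⊆ B(K₁) and B ⊆ B(K₂) von Neumann algebras with B·U·A ⊆ U, and T ∈ B(K₁,K₂). If Q is a projection in B′ and P is a projection in A′ with Q U P = 0 for all U ∈ U, then ‖QTP‖ ≤ r_U(T). -/

import Mathlib

open scoped InnerProductSpace
open ContinuousLinearMap

/-- `r_U(T)`: the supremum of `|⟨Tξ,η⟩|` over unit vectors `ξ, η` annihilating `U`. -/
noncomputable def rU {H K : Type*} [NormedAddCommGroup H] [InnerProductSpace ℂ H]
    [NormedAddCommGroup K] [InnerProductSpace ℂ K]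
    (U : Set (H →L[ℂ] K)) (T : H →L[ℂ] K) : ℝ :=
  sSup {c : ℝ | ∃ ξ : H, ∃ η : K, ‖ξ‖ = 1 ∧ ‖η‖ = 1 ∧
    (∀ X ∈ U, ⟪X ξ, η⟫_ℂ = 0) ∧ c = ‖(⟪T ξ, η⟫_ℂ)‖}

/-- An orthogonal projection: a self-adjoint idempotent. -/
def IsProjection {K : Type*} [NormedAddCommGroup K] [InnerProductSpace ℂ K] [CompleteSpace K]
    (P : K →L[ℂ] K) : Prop :=
  IsSelfAdjoint P ∧ P ∘L P = P

/-- A set of operators is weak* closed (equivalently, for linear subspaces, closed in the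
weak operator topology). -/
def IsWeakStarClosed {H K : Type*} [NormedAddCommGroup H] [InnerProductSpace ℂ H]
    [NormedAddCommGroup K] [InnerProductSpace ℂ K] (U : Set (H →L[ℂ] K)) : Prop :=
  IsClosed ((ContinuousLinearMapWOT.ofCLM : (H →L[ℂ] K) → (H →WOT[ℂ] K)) '' U)

lemma sa_inner {K : Type*} [NormedAddCommGroup K] [InnerProductSpace ℂ K] [CompleteSpace K]
    (Q : K →L[ℂ] K) (hQ : IsSelfAdjoint Q) (x y : K) : ⟪Q x, y⟫_ℂ = ⟪x, Q y⟫_ℂ := by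
  conv_lhs => rw [← (ContinuousLinearMap.isSelfAdjoint_iff').mp hQ]
  exact ContinuousLinearMap.adjoint_inner_left _ _ _

lemma proj_norm_apply_le {K : Type*} [NormedAddCommGroup K] [InnerProductSpace ℂ K]
    [CompleteSpace K] (P : K →L[ℂ] K) (hP : IsProjection P) (x : K) : ‖P x‖ ≤ ‖x‖ := by
  rcases eq_or_ne (P x) 0 with h | h
  · simp [h]
  · have h1 : ⟪P x, P x⟫_ℂ = ⟪x, P x⟫_ℂ := by
      rw [sa_inner P hP.1]
      congr 1
      calc P (P x) = (P ∘L P) x := rfl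
        _ = P x := by rw [hP.2]
    have h2 : (‖P x‖ : ℝ) ^ 2 = ‖⟪x, P x⟫_ℂ‖ := by
      rw [← h1, inner_self_eq_norm_sq_to_K]
      simp [norm_pow, RCLike.norm_ofReal, abs_of_nonneg (norm_nonneg (P x))]
    have h3 : ‖⟪x, P x⟫_ℂ‖ ≤ ‖x‖ * ‖P x‖ := norm_inner_le_norm _ _
    have hpos : 0 < ‖P x‖ := norm_pos_iff.mpr h
    nlinarith [h2, h3, hpos]

/-- One inequality of Lemma 1.3: for projections `Q ∈ ℬ'`, `P ∈ 𝒜'` with `Q U P = 0`,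
one has `‖QTP‖ ≤ r_U(T)`. -/
theorem norm_compress_le_rU {K₁ K₂ : Type*}
    [NormedAddCommGroup K₁] [InnerProductSpace ℂ K₁] [CompleteSpace K₁]
    [NormedAddCommGroup K₂] [InnerProductSpace ℂ K₂] [CompleteSpace K₂]
    (𝒜 : VonNeumannAlgebra K₁) (ℬ : VonNeumannAlgebra K₂)
    (U : Submodule ℂ (K₁ →L[ℂ] K₂))
    (hclosed : IsWeakStarClosed (U : Set (K₁ →L[ℂ] K₂)))
    (hmod : ∀ B ∈ ℬ, ∀ X ∈ U, ∀ A ∈ 𝒜, B ∘L X ∘L A ∈ U)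
    (T : K₁ →L[ℂ] K₂)
    (Q : K₂ →L[ℂ] K₂) (P : K₁ →L[ℂ] K₁)
    (hQ : IsProjection Q) (hQ' : Q ∈ ℬ.commutant)
    (hP : IsProjection P) (hP' : P ∈ 𝒜.commutant)
    (hQUP : ∀ X ∈ U, Q ∘L X ∘L P = 0) :
    ‖Q ∘L T ∘L P‖ ≤ rU (U : Set (K₁ →L[ℂ] K₂)) T := by
  set S := {c : ℝ | ∃ ξ : K₁, ∃ η : K₂, ‖ξ‖ = 1 ∧ ‖η‖ = 1 ∧
    (∀ X ∈ (U : Set (K₁ →L[ℂ] K₂)), ⟪X ξ, η⟫_ℂ = 0) ∧ c = ‖(⟪T ξ, η⟫_ℂ)‖} with hS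
  have hbdd : BddAbove S := by
    refine ⟨‖T‖, fun c hc => ?_⟩
    obtain ⟨ξ, η, hξ, hη, _, rfl⟩ := hc
    calc ‖(⟪T ξ, η⟫_ℂ)‖ ≤ ‖T ξ‖ * ‖η‖ := norm_inner_le_norm _ _
      _ ≤ ‖T‖ * ‖ξ‖ * ‖η‖ := by
          gcongr; exact le_opNorm T ξ
      _ = ‖T‖ := by rw [hξ, hη]; ring
  have hr0 : 0 ≤ rU (U : Set (K₁ →L[ℂ] K₂)) T := by
    apply Real.sSup_nonneg
    rintro c ⟨ξ, η, _, _, _, rfl⟩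
    exact norm_nonneg _
  apply ContinuousLinearMap.opNorm_le_bound _ hr0
  intro ξ
  rw [ContinuousLinearMap.comp_apply, ContinuousLinearMap.comp_apply]
  set v := Q (T (P ξ)) with hv
  rcases eq_or_ne v 0 with h0 | h0
  · rw [h0]; simp; positivity
  have hPx : P ξ ≠ 0 := by
    intro h; apply h0; rw [hv, h]; simp
  have hvpos : (0:ℝ) < ‖v‖ := norm_pos_iff.mpr h0
  have hPpos : (0:ℝ) < ‖P ξ‖ := norm_pos_iff.mpr hPx
  set ξ' : K₁ := (‖P ξ‖⁻¹ : ℂ) • P ξ with hξ'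
  set η : K₂ := (‖v‖⁻¹ : ℂ) • v with hη
  have hξ'1 : ‖ξ'‖ = 1 := by
    rw [hξ', norm_smul]
    simp [abs_of_pos hPpos]
    field_simp
  have hη1 : ‖η‖ = 1 := by
    rw [hη, norm_smul]
    simp [abs_of_pos hvpos]
    field_simp
  have hQv : Q v = v := by
    rw [hv]
    calc Q (Q (T (P ξ))) = (Q ∘L Q) (T (P ξ)) := rfl
      _ = Q (T (P ξ)) := by rw [hQ.2]
  have hQη : Q η = η := by rw [hη, map_smul, hQv]
  have hann : ∀ X ∈ (U : Set (K₁ →L[ℂ] K₂)), ⟪X ξ', η⟫_ℂ = 0 := by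
    intro X hX
    rw [hξ', hη, map_smul, inner_smul_left, inner_smul_right]
    have : ⟪X (P ξ), η⟫_ℂ = 0 := by
      rw [← hQη, ← sa_inner Q hQ.1]
      have : Q (X (P ξ)) = (Q ∘L X ∘L P) ξ := rfl
      rw [this, hQUP X hX]
      simp
    rw [hη] at this
    rw [inner_smul_right] at this
    rcases mul_eq_zero.mp this with h | h
    · exfalso
      apply inv_ne_zero (by exact_mod_cast hvpos.ne' : (‖v‖ : ℂ) ≠ 0) h
    · rw [h]; ring
  have hmem : ‖(⟪T ξ', η⟫_ℂ)‖ ∈ S := ⟨ξ', η, hξ'1, hη1, hann, rfl⟩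
  have hle : ‖(⟪T ξ', η⟫_ℂ)‖ ≤ rU (U : Set (K₁ →L[ℂ] K₂)) T := le_csSup hbdd hmem
  -- Now relate ‖v‖ to ⟪T ξ', η⟫
  have hkey : ‖v‖ = ‖P ξ‖ * ‖(⟪T ξ', η⟫_ℂ)‖ := by
    have h1 : ⟪v, η⟫_ℂ = ⟪T (P ξ), η⟫_ℂ := by
      rw [hv, sa_inner Q hQ.1, hQη]
    have h2 : ⟪v, η⟫_ℂ = (‖v‖ : ℂ) := by
      rw [hη, inner_smul_right, inner_self_eq_norm_sq_to_K]
      have : (‖v‖ : ℂ) ≠ 0 := by exact_mod_cast hvpos.ne'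
      field_simp
      norm_cast
    have h3 : ⟪T (P ξ), η⟫_ℂ = (‖P ξ‖ : ℂ) * ⟪T ξ', η⟫_ℂ := by
      rw [hξ', map_smul, inner_smul_left]
      have : (starRingEnd ℂ) ((‖P ξ‖⁻¹ : ℝ) : ℂ) = ((‖P ξ‖⁻¹ : ℝ) : ℂ) := by
        simp [Complex.conj_ofReal]
      push_cast at this ⊢
      rw [this]
      have hne : ((‖P ξ‖ : ℝ) : ℂ) ≠ 0 := by exact_mod_cast hPpos.ne'
      field_simp
    have : (‖v‖ : ℂ) = (‖P ξ‖ : ℂ) * ⟪T ξ', η⟫_ℂ := by rw [← h2, h1, h3]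
    have := congrArg norm this
    simpa [abs_of_pos hvpos, abs_of_pos hPpos] using this
  rw [hkey]
  calc ‖P ξ‖ * ‖(⟪T ξ', η⟫_ℂ)‖ ≤ ‖ξ‖ * (rU (U : Set (K₁ →L[ℂ] K₂)) T) := by
        apply mul_le_mul (proj_norm_apply_le P hP ξ) hle (norm_nonneg _) (norm_nonneg _)
    _ = (rU (U : Set (K₁ →L[ℂ] K₂)) T) * ‖ξ‖ := by ring
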